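/- arXiv:1404.6766 — 3 statements merged into one kernel-verified Lean document; each statement's English description precedes it below -/
import Mathlib

section
/- Let (t_{s,j}) be a solution of the system (dist)–(ne2). Then: (a) whenever t_{s,k} > 0 and 1 ≤ j < k ≤ n, also t_{s,j} > 0; and (b) t_{1,j} > 0 for every j ∈ {1,…,n}. -/
/-- Probability of at least `m` successes in `l-1` Bernoulli(x) trials. -/
noncomputable def w (l m : ℕ) (x : ℝ) : ℝ :=
  ∑ i ∈ Finset.Icc m (l - 1), ((l - 1).choose i : ℝ) * x ^ i * (1 - x) ^ (l - 1 - i)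

/-- `W x = 1 - w x`. -/
noncomputable def W (l m : ℕ) (x : ℝ) : ℝ := 1 - w l m x

/-- `γ_{s,j} = ∑_{k=j}^n t_{s,k} q_k`. -/
noncomputable def gam (n : ℕ) (q : ℕ → ℝ) (t : ℕ → ℕ → ℝ) (s j : ℕ) : ℝ :=
  ∑ k ∈ Finset.Icc j n, t s k * q k

/-- `(t_{s,j})` is a solution of the system (dist)–(ne2). -/
def IsSolution (l m d n : ℕ) (M q : ℕ → ℝ) (t : ℕ → ℕ → ℝ) : Prop :=
  (∀ s ∈ Finset.Icc 1 d, ∀ j ∈ Finset.Icc 1 n, 0 ≤ t s j) ∧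
  ∀ j ∈ Finset.Icc 1 n,
    (∑ s ∈ Finset.Icc 1 d, t s j) = 1 ∧
    ∃ dj ∈ Finset.Icc 1 d,
      (∀ s ∈ Finset.Icc 1 d, s ≤ dj → 0 < t s j) ∧
      (∀ s ∈ Finset.Icc 1 d, dj < s → t s j = 0) ∧
      (∀ s ∈ Finset.Icc 1 dj,
        M s * W l m (gam n q t s j) = M 1 * W l m (gam n q t 1 j)) ∧
      (∀ s, dj ≤ s → s < d →
        M (s + 1) * W l m (gam n q t (s + 1) j) ≤ M s * W l m (gam n q t s j))

open Finset Polynomial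

lemma w_eq_eval (l m : ℕ) (x : ℝ) :
    w l m x = (∑ i ∈ Finset.Icc m (l-1), bernsteinPolynomial ℝ (l-1) i).eval x := by
  simp [w, bernsteinPolynomial, Polynomial.eval_finset_sum]

lemma deriv_sum_bernstein (N mm : ℕ) (h1 : 1 ≤ mm) (h2 : mm ≤ N) :
    Polynomial.derivative (∑ i ∈ Finset.Icc mm N, bernsteinPolynomial ℝ N i)
      = (N : ℝ[X]) * bernsteinPolynomial ℝ (N-1) (mm-1) := by
  obtain ⟨m', rfl⟩ : ∃ m', mm = m' + 1 := ⟨mm - 1, by omega⟩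
  rw [map_sum, ← Finset.Ico_add_one_right_eq_Icc, Finset.sum_Ico_eq_sum_range]
  have hterm : ∀ i : ℕ,
      Polynomial.derivative (bernsteinPolynomial ℝ N (m' + (1 + i)))
        = (N : ℝ[X]) * (bernsteinPolynomial ℝ (N-1) (m' + i)
            - bernsteinPolynomial ℝ (N-1) (m' + (i + 1))) := by
    intro i
    have e1 : m' + (1 + i) = (m' + i) + 1 := by omega
    have e2 : m' + (i + 1) = (m' + i) + 1 := by omega
    rw [e1, e2, bernsteinPolynomial.derivative_succ]
  simp only [add_assoc, hterm]
  rw [← Finset.mul_sum, Finset.sum_range_sub' (fun i => bernsteinPolynomial ℝ (N-1) (m' + i))]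
  have hz : bernsteinPolynomial ℝ (N-1) (m' + (N + 1 - (m' + 1))) = 0 := by
    have : m' + (N + 1 - (m' + 1)) = N := by omega
    rw [this, bernsteinPolynomial]
    have : (N-1).choose N = 0 := Nat.choose_eq_zero_of_lt (by omega)
    simp [this]
  rw [hz]
  simp

lemma w_strictMonoOn (l m : ℕ) (hm : 1 ≤ m) (hml : m ≤ l - 1) :
    StrictMonoOn (w l m) (Set.Icc (0:ℝ) 1) := by
  have hw : w l m = fun x => (∑ i ∈ Finset.Icc m (l-1), bernsteinPolynomial ℝ (l-1) i).eval x :=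
    funext fun x => w_eq_eval l m x
  rw [hw]
  apply strictMonoOn_of_deriv_pos (convex_Icc 0 1)
  · exact (Polynomial.continuous _).continuousOn
  · intro x hx
    rw [interior_Icc] at hx
    rw [Polynomial.deriv, deriv_sum_bernstein (l-1) m hm hml]
    rw [bernsteinPolynomial]
    simp only [Polynomial.eval_mul, Polynomial.eval_natCast, Polynomial.eval_pow,
      Polynomial.eval_sub, Polynomial.eval_one, Polynomial.eval_X]
    have h1 : (0:ℝ) < ((l-1 : ℕ) : ℝ) := by
      have : 1 ≤ l - 1 := le_trans hm hml
      exact_mod_cast Nat.lt_of_lt_of_le Nat.zero_lt_one this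
    have h2 : (0:ℝ) < (((l-1-1).choose (m-1) : ℕ) : ℝ) := by
      have : m - 1 ≤ l - 1 - 1 := by omega
      exact_mod_cast Nat.choose_pos this
    have h3 : (0:ℝ) < x ^ (m-1) := pow_pos hx.1 _
    have h4 : (0:ℝ) < (1 - x) ^ (l - 1 - 1 - (m-1)) := pow_pos (by linarith [hx.2]) _
    positivity

theorem stmt3 (l m d n : ℕ) (hm : 1 ≤ m) (hml : m ≤ l - 1) (hd : 2 ≤ d) (hn : 1 ≤ n)
    (M q : ℕ → ℝ)
    (hM : ∀ s ∈ Finset.Icc 1 d, ∀ r ∈ Finset.Icc 1 d, s ≤ r → M r ≤ M s)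
    (hMpos : ∀ s ∈ Finset.Icc 1 d, 0 < M s)
    (hq : ∀ j ∈ Finset.Icc 1 n, 0 < q j)
    (hqsum : ∑ j ∈ Finset.Icc 1 n, q j < 1)
    (t : ℕ → ℕ → ℝ) (hsol : IsSolution l m d n M q t) :
    (∀ s ∈ Finset.Icc 1 d, ∀ j k : ℕ, 1 ≤ j → j < k → k ≤ n →
      0 < t s k → 0 < t s j) ∧
    (∀ j ∈ Finset.Icc 1 n, 0 < t 1 j) := by
  obtain ⟨hnn, hmain⟩ := hsol
  have h1d : (1:ℕ) ∈ Finset.Icc 1 d := by simp; omega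
  -- part (b)
  have hb : ∀ j ∈ Finset.Icc 1 n, 0 < t 1 j := by
    intro j hj
    obtain ⟨-, dj, hdj, hpos, -⟩ := hmain j hj
    exact hpos 1 h1d (Finset.mem_Icc.mp hdj).1
  -- t ≤ 1
  have ht1 : ∀ s ∈ Finset.Icc 1 d, ∀ k ∈ Finset.Icc 1 n, t s k ≤ 1 := by
    intro s hs k hk
    have hsum := (hmain k hk).1
    have := Finset.single_le_sum (f := fun s' => t s' k) (fun i hi => hnn i hi k hk) hs
    linarith
  -- gam bounds
  have hgam_mem : ∀ s ∈ Finset.Icc 1 d, ∀ j, 1 ≤ j →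
      gam n q t s j ∈ Set.Icc (0:ℝ) 1 := by
    intro s hs j hj
    constructor
    · apply Finset.sum_nonneg
      intro k hk
      have hk' : k ∈ Finset.Icc 1 n := by
        simp only [Finset.mem_Icc] at hk ⊢; omega
      exact mul_nonneg (hnn s hs k hk') (hq k hk').le
    · have hle : gam n q t s j ≤ ∑ k ∈ Finset.Icc j n, q k := by
        apply Finset.sum_le_sum
        intro k hk
        have hk' : k ∈ Finset.Icc 1 n := by
          simp only [Finset.mem_Icc] at hk ⊢; omega
        nlinarith [hq k hk', ht1 s hs k hk', hnn s hs k hk']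
      have hle2 : ∑ k ∈ Finset.Icc j n, q k ≤ ∑ k ∈ Finset.Icc 1 n, q k := by
        apply Finset.sum_le_sum_of_subset_of_nonneg
        · intro k hk; simp only [Finset.mem_Icc] at hk ⊢; omega
        · intro k hk _; exact (hq k hk).le
      linarith
  -- the key step lemma
  have hstep : ∀ s ∈ Finset.Icc 1 d, ∀ j, 1 ≤ j → j + 1 ≤ n →
      0 < t s (j+1) → 0 < t s j := by
    intro s hs j hj1 hjn hts
    by_contra hneg
    have hjmem : j ∈ Finset.Icc 1 n := by simp only [Finset.mem_Icc]; omega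
    have hj1mem : (j+1) ∈ Finset.Icc 1 n := by simp only [Finset.mem_Icc]; omega
    have htzero : t s j = 0 := le_antisymm (not_lt.mp hneg) (hnn s hs j hjmem)
    obtain ⟨-, dj, hdj, hposj, -, heqj, hchainj⟩ := hmain j hjmem
    obtain ⟨-, dk, hdk, -, hzerok, heqk, -⟩ := hmain (j+1) hj1mem
    have hsdk : s ≤ dk := by
      by_contra h
      exact absurd (hzerok s hs (not_le.mp h)) (ne_of_gt hts)
    have hdjs : dj < s := by
      by_contra h
      exact hneg (hposj s hs (not_lt.mp h))
    -- splitting gam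
    have hsplit : ∀ s', gam n q t s' j = t s' j * q j + gam n q t s' (j+1) := by
      intro s'
      unfold gam
      rw [Finset.Icc_eq_cons_Ioc (by omega : j ≤ n), Finset.sum_cons, ← Finset.Icc_add_one_left_eq_Ioc]
    have hgs : gam n q t s j = gam n q t s (j+1) := by
      rw [hsplit s, htzero]; ring
    have hg1 : gam n q t 1 (j+1) < gam n q t 1 j := by
      rw [hsplit 1]
      nlinarith [hb j hjmem, hq j hjmem]
    -- chain inequality at j
    have hchain : ∀ r, dj ≤ r → r ≤ d →
        M r * W l m (gam n q t r j) ≤ M 1 * W l m (gam n q t 1 j) := by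
      intro r hr
      induction r, hr using Nat.le_induction with
      | base =>
        intro _
        exact le_of_eq (heqj dj (Finset.mem_Icc.mpr ⟨(Finset.mem_Icc.mp hdj).1, le_refl dj⟩))
      | succ r hr ih =>
        intro hrd
        have h1 := hchainj r hr (by omega)
        have h2 := ih (by omega)
        linarith
    have h1 := hchain s hdjs.le (Finset.mem_Icc.mp hs).2
    have h2 := heqk s (Finset.mem_Icc.mpr ⟨(Finset.mem_Icc.mp hs).1, hsdk⟩)
    -- strict monotonicity
    have hWlt : W l m (gam n q t 1 j) < W l m (gam n q t 1 (j+1)) := by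
      unfold W
      have := w_strictMonoOn l m hm hml (hgam_mem 1 h1d (j+1) (by omega))
        (hgam_mem 1 h1d j hj1) hg1
      linarith
    have hM1 : 0 < M 1 := hMpos 1 h1d
    rw [hgs] at h1
    have hmul := mul_lt_mul_of_pos_left hWlt hM1
    linarith
  -- part (a)
  have ha : ∀ s ∈ Finset.Icc 1 d, ∀ k, k ≤ n → 0 < t s k → ∀ j, 1 ≤ j → j < k →
      0 < t s j := by
    intro s hs k
    induction k with
    | zero => intro _ _ j _ hjk; omega
    | succ K IH =>
      intro hKn hts j hj hjK
      have hK1 : 1 ≤ K := by omega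
      have htK : 0 < t s K := hstep s hs K hK1 hKn hts
      rcases eq_or_lt_of_le (Nat.lt_succ_iff.mp hjK) with rfl | h
      · exact htK
      · exact IH (by omega) htK j hj h
  exact ⟨fun s hs j k hj hjk hkn htk => ha s hs k hkn htk j hj hjk, hb⟩
end

section
/- Let (t_{s,j}) be a solution of the system (dist)–(ne2), with the endpoints U_{s,j}, L_{s,j} defined by the stated recursion. If 1 ≤ k < j ≤ n and s ∈ {1,…,d} satisfy t_{s,k} > 0 and t_{s,j} = 0, then L_{s,k} ≥ U_{1,j}. -/
private lemma tele (g : ℕ → ℝ) : ∀ {a b : ℕ}, a ≤ b →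
    ∑ i ∈ Finset.Icc a b, (g i - g (i + 1)) = g a - g (b + 1) := by
  intro a b hab
  induction b, hab using Nat.le_induction with
  | base => simp
  | succ b hab ih =>
    rw [Finset.sum_Icc_succ_top (by omega), ih]
    ring

private lemma hasDerivAt_w (l m : ℕ) (hm : 1 ≤ m) (hml : m ≤ l - 1) (x : ℝ) :
    HasDerivAt (w l m)
      ((m * (l - 1).choose m : ℕ) * x ^ (m - 1) * (1 - x) ^ (l - 1 - m)) x := by
  set N := l - 1 with hN
  set b : ℕ → ℝ := fun i => ((i * N.choose i : ℕ) : ℝ) * x ^ (i - 1) * (1 - x) ^ (N - i) with hb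
  have hterm : ∀ i ∈ Finset.Icc m N,
      HasDerivAt (fun y : ℝ => (N.choose i : ℝ) * y ^ i * (1 - y) ^ (N - i))
        (b i - b (i + 1)) x := by
    intro i hi
    simp only [Finset.mem_Icc] at hi
    have h1 : HasDerivAt (fun y : ℝ => (N.choose i : ℝ) * y ^ i)
        ((N.choose i : ℝ) * (i * x ^ (i - 1))) x := (hasDerivAt_pow i x).const_mul _
    have hinner : HasDerivAt (fun y : ℝ => 1 - y) (-1) x := by
      simpa using (hasDerivAt_id x).const_sub 1
    have h2 : HasDerivAt (fun y : ℝ => (1 - y) ^ (N - i))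
        (↑(N - i) * (1 - x) ^ (N - i - 1) * (-1)) x := hinner.pow (N - i)
    have h3 := h1.fun_mul h2
    refine h3.congr_deriv ?_
    have hcast : ((i + 1) * N.choose (i + 1) : ℕ) = N.choose i * (N - i) := by
      rw [mul_comm]
      exact Nat.choose_succ_right_eq N i
    have hexp : N - (i + 1) = N - i - 1 := by omega
    simp only [hb, hcast, hexp]
    push_cast [Nat.cast_sub hi.2]
    ring
  have hsum := HasDerivAt.fun_sum hterm
  have htel : ∑ i ∈ Finset.Icc m N, (b i - b (i + 1)) = b m := by
    rw [tele b hml]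
    have : N.choose (N + 1) = 0 := Nat.choose_eq_zero_of_lt (by omega)
    simp [hb, this]
  rw [htel] at hsum
  exact hsum

lemma w_monotoneOn (l m : ℕ) (hm : 1 ≤ m) (hml : m ≤ l - 1) :
    MonotoneOn (w l m) (Set.Icc 0 1) := by
  have hdiff : ∀ x : ℝ, HasDerivAt (w l m)
      ((m * (l - 1).choose m : ℕ) * x ^ (m - 1) * (1 - x) ^ (l - 1 - m)) x :=
    hasDerivAt_w l m hm hml
  apply monotoneOn_of_deriv_nonneg (convex_Icc 0 1)
  · exact fun x _ => ((hdiff x).continuousAt).continuousWithinAt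
  · exact fun x _ => ((hdiff x).differentiableAt).differentiableWithinAt
  · intro x hx
    rw [interior_Icc, Set.mem_Ioo] at hx
    rw [(hdiff x).deriv]
    have h1 : (0:ℝ) ≤ x := hx.1.le
    have h2 : (0:ℝ) ≤ 1 - x := by linarith [hx.2]
    positivity

lemma w_lt_one (l m : ℕ) (hm : 1 ≤ m) {x : ℝ} (hx0 : 0 ≤ x) (hx1 : x < 1) :
    w l m x < 1 := by
  set N := l - 1 with hN
  have h1x : (0:ℝ) ≤ 1 - x := by linarith
  have hbin : ∑ i ∈ Finset.range (N + 1), (N.choose i : ℝ) * x ^ i * (1 - x) ^ (N - i) = 1 := by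
    have h := add_pow x (1 - x) N
    simp only [add_sub_cancel, one_pow] at h
    rw [Finset.sum_congr rfl (fun i _ => by ring :
      ∀ i ∈ Finset.range (N + 1), (N.choose i : ℝ) * x ^ i * (1 - x) ^ (N - i)
        = x ^ i * (1 - x) ^ (N - i) * (N.choose i : ℝ))]
    exact h.symm
  have hsub : Finset.Icc m N ⊆ (Finset.range (N + 1)).erase 0 := by
    intro i hi
    simp only [Finset.mem_Icc] at hi
    simp only [Finset.mem_erase, Finset.mem_range]
    omega
  have hle : w l m x ≤ ∑ i ∈ (Finset.range (N + 1)).erase 0,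
      (N.choose i : ℝ) * x ^ i * (1 - x) ^ (N - i) := by
    apply Finset.sum_le_sum_of_subset_of_nonneg hsub
    intro i _ _
    positivity
  have h0mem : (0:ℕ) ∈ Finset.range (N + 1) := by simp
  have herase : ∑ i ∈ (Finset.range (N + 1)).erase 0,
      (N.choose i : ℝ) * x ^ i * (1 - x) ^ (N - i) = 1 - (1 - x) ^ N := by
    have := Finset.add_sum_erase _ (fun i => (N.choose i : ℝ) * x ^ i * (1 - x) ^ (N - i)) h0mem
    simp only [Nat.choose_zero_right, pow_zero, Nat.cast_one, one_mul, mul_one, Nat.sub_zero] at this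
    rw [hbin] at this
    linarith
  have h1x' : (0:ℝ) < 1 - x := by linarith
  have hpow : (0:ℝ) < (1 - x) ^ N := by positivity
  calc w l m x ≤ 1 - (1 - x) ^ N := by rw [← herase]; exact hle
    _ < 1 := by linarith

lemma W_pos (l m : ℕ) (hm : 1 ≤ m) {x : ℝ} (hx0 : 0 ≤ x) (hx1 : x < 1) :
    0 < W l m x := by
  have := w_lt_one l m hm hx0 hx1
  unfold W; linarith

lemma W_le (l m : ℕ) (hm : 1 ≤ m) (hml : m ≤ l - 1) {x y : ℝ}
    (hy0 : 0 ≤ y) (hyx : y ≤ x) (hx1 : x ≤ 1) : W l m x ≤ W l m y := by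
  have := w_monotoneOn l m hm hml (Set.mem_Icc.2 ⟨hy0, le_trans hyx hx1⟩)
    (Set.mem_Icc.2 ⟨le_trans hy0 hyx, hx1⟩) hyx
  unfold W; linarith

theorem stmt12 (l m d n : ℕ) (hm : 1 ≤ m) (hml : m ≤ l - 1) (hd : 2 ≤ d) (hn : 1 ≤ n)
    (M q : ℕ → ℝ)
    (hM : ∀ s ∈ Finset.Icc 1 d, ∀ r ∈ Finset.Icc 1 d, s ≤ r → M r ≤ M s)
    (hMpos : ∀ s ∈ Finset.Icc 1 d, 0 < M s)
    (hq : ∀ j ∈ Finset.Icc 1 n, 0 < q j)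
    (hqsum : ∑ j ∈ Finset.Icc 1 n, q j < 1)
    (c v : ℝ) (f : ℕ → ℝ → ℝ)
    (hfc : ∀ j ∈ Finset.Icc 1 n, Continuous (f j))
    (hfm : ∀ j ∈ Finset.Icc 1 n, StrictMono (f j))
    (hfb : ∀ j ∈ Finset.Icc 1 n, Function.Bijective (f j))
    (hford : ∀ i ∈ Finset.Icc 1 n, ∀ j ∈ Finset.Icc 1 n, i < j → ∀ x : ℝ, f i x < f j x)
    (hfv : c < f 1 v)
    (hassum : ∀ i ∈ Finset.Icc 1 n, ∀ j ∈ Finset.Icc 1 n, i < j →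
      ∀ x y : ℝ, y < x → c < f i y →
        (f i y - c) / (f j y - c) < (f i x - c) / (f j x - c))
    (t : ℕ → ℕ → ℝ) (hsol : IsSolution l m d n M q t)
    (U L : ℕ → ℕ → ℝ)
    (hU1 : ∀ s ∈ Finset.Icc 1 d, U s 1 = v)
    (hrecL : ∀ s ∈ Finset.Icc 1 d, ∀ j ∈ Finset.Icc 1 n,
      (f j (L s j) - c) * W l m (gam n q t s (j + 1)) =
        (f j (U s j) - c) * W l m (gam n q t s j))
    (hrecU : ∀ s ∈ Finset.Icc 1 d, ∀ j ∈ Finset.Icc 1 n, U s (j + 1) = L s j)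
    (k j : ℕ) (hk1 : 1 ≤ k) (hkj : k < j) (hjn : j ≤ n)
    (s : ℕ) (hs : s ∈ Finset.Icc 1 d)
    (htk : 0 < t s k) (htj : t s j = 0) :
    U 1 j ≤ L s k := by
  classical
  obtain ⟨htnn, hsys⟩ := hsol
  have hd1 : (1:ℕ) ∈ Finset.Icc 1 d := Finset.mem_Icc.2 ⟨le_rfl, by omega⟩
  have ht1 : ∀ s' ∈ Finset.Icc 1 d, ∀ k' ∈ Finset.Icc 1 n, t s' k' ≤ 1 := by
    intro s' hs' k' hk'
    have hsum := (hsys k' hk').1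
    calc t s' k' ≤ ∑ s'' ∈ Finset.Icc 1 d, t s'' k' :=
          Finset.single_le_sum (fun i hi => htnn i hi k' hk') hs'
      _ = 1 := hsum
  have hgnn : ∀ s' ∈ Finset.Icc 1 d, ∀ j', 1 ≤ j' → 0 ≤ gam n q t s' j' := by
    intro s' hs' j' hj'
    apply Finset.sum_nonneg
    intro k' hk'
    simp only [Finset.mem_Icc] at hk'
    have hk'' : k' ∈ Finset.Icc 1 n := Finset.mem_Icc.2 ⟨by omega, hk'.2⟩
    exact mul_nonneg (htnn s' hs' k' hk'') (hq k' hk'').le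
  have hglt : ∀ s' ∈ Finset.Icc 1 d, ∀ j', 1 ≤ j' → gam n q t s' j' < 1 := by
    intro s' hs' j' hj'
    have h1 : gam n q t s' j' ≤ ∑ k' ∈ Finset.Icc j' n, q k' := by
      apply Finset.sum_le_sum
      intro k' hk'
      simp only [Finset.mem_Icc] at hk'
      have hk'' : k' ∈ Finset.Icc 1 n := Finset.mem_Icc.2 ⟨by omega, hk'.2⟩
      nlinarith [htnn s' hs' k' hk'', ht1 s' hs' k' hk'', hq k' hk'']
    have h2 : ∑ k' ∈ Finset.Icc j' n, q k' ≤ ∑ k' ∈ Finset.Icc 1 n, q k' := by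
      apply Finset.sum_le_sum_of_subset_of_nonneg
      · intro x hx; simp only [Finset.mem_Icc] at *; omega
      · intro x hx _; exact (hq x hx).le
    linarith
  have hWpos : ∀ s' ∈ Finset.Icc 1 d, ∀ j', 1 ≤ j' → 0 < W l m (gam n q t s' j') :=
    fun s' hs' j' hj' => W_pos l m hm (hgnn s' hs' j' hj') (hglt s' hs' j' hj')
  have hgstep : ∀ (s'' : ℕ), ∀ j' ∈ Finset.Icc 1 n,
      gam n q t s'' j' = t s'' j' * q j' + gam n q t s'' (j'+1) := by
    intro s'' j' hj'
    simp only [Finset.mem_Icc] at hj'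
    have hset : Finset.Icc j' n = insert j' (Finset.Icc (j'+1) n) := by
      ext x; simp only [Finset.mem_Icc, Finset.mem_insert]; omega
    unfold gam
    rw [hset, Finset.sum_insert (by simp only [Finset.mem_Icc]; omega)]
  have hWanti : ∀ s' ∈ Finset.Icc 1 d, ∀ j' ∈ Finset.Icc 1 n,
      W l m (gam n q t s' j') ≤ W l m (gam n q t s' (j'+1)) := by
    intro s' hs' j' hj'
    simp only [Finset.mem_Icc] at hj'
    have hstep := hgstep s' j' (Finset.mem_Icc.2 hj')
    have hj'mem : j' ∈ Finset.Icc 1 n := Finset.mem_Icc.2 hj'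
    have htq : 0 ≤ t s' j' * q j' := mul_nonneg (htnn s' hs' j' hj'mem) (hq j' hj'mem).le
    exact W_le l m hm hml (hgnn s' hs' (j'+1) (by omega)) (by linarith)
      (hglt s' hs' j' hj'.1).le
  -- equilibrium facts
  have hMW_le : ∀ j' ∈ Finset.Icc 1 n, ∀ s' ∈ Finset.Icc 1 d,
      M s' * W l m (gam n q t s' j') ≤ M 1 * W l m (gam n q t 1 j') := by
    intro j' hj' s' hs'
    obtain ⟨dj, hdj, _hpos, _hzero, heqs, hchain⟩ := (hsys j' hj').2
    simp only [Finset.mem_Icc] at hs' hdj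
    by_cases hsdj : s' ≤ dj
    · exact le_of_eq (heqs s' (Finset.mem_Icc.2 ⟨hs'.1, hsdj⟩))
    · push_neg at hsdj
      have key : ∀ r, dj ≤ r → r ≤ d →
          M r * W l m (gam n q t r j') ≤ M 1 * W l m (gam n q t 1 j') := by
        intro r hr
        induction r, hr using Nat.le_induction with
        | base => intro _; exact le_of_eq (heqs dj (Finset.mem_Icc.2 ⟨hdj.1, le_rfl⟩))
        | succ r hr ih =>
          intro hrd
          exact le_trans (hchain r hr (by omega)) (ih (by omega))
      exact key s' (by omega) hs'.2
  have hMW_eq : ∀ j' ∈ Finset.Icc 1 n, ∀ s' ∈ Finset.Icc 1 d, 0 < t s' j' →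
      M s' * W l m (gam n q t s' j') = M 1 * W l m (gam n q t 1 j') := by
    intro j' hj' s' hs' htpos
    obtain ⟨dj, hdj, _hpos, hzero, heqs, _hchain⟩ := (hsys j' hj').2
    simp only [Finset.mem_Icc] at hs' hdj
    by_cases hsdj : s' ≤ dj
    · exact heqs s' (Finset.mem_Icc.2 ⟨hs'.1, hsdj⟩)
    · push_neg at hsdj
      have := hzero s' (Finset.mem_Icc.2 hs') hsdj
      rw [this] at htpos
      exact absurd htpos (lt_irrefl 0)
  -- basic recursion facts
  have stepLU : ∀ s' ∈ Finset.Icc 1 d, ∀ i ∈ Finset.Icc 1 n, c < f i (U s' i) →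
      c < f i (L s' i) ∧ L s' i ≤ U s' i := by
    intro s' hs' i hi hU
    have hi' := Finset.mem_Icc.1 hi
    have hrec := hrecL s' hs' i hi
    have hW1 : 0 < W l m (gam n q t s' i) := hWpos s' hs' i hi'.1
    have hW2 : 0 < W l m (gam n q t s' (i+1)) := hWpos s' hs' (i+1) (by omega)
    have hWle := hWanti s' hs' i hi
    have hL : c < f i (L s' i) := by nlinarith
    refine ⟨hL, ?_⟩
    have h2 : (f i (L s' i) - c) * W l m (gam n q t s' (i+1)) ≤
        (f i (U s' i) - c) * W l m (gam n q t s' (i+1)) := by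
      rw [hrec]; nlinarith
    have h3 := le_of_mul_le_mul_right h2 hW2
    exact ((hfm i hi).le_iff_le).1 (by linarith)
  have key1 : ∀ s' ∈ Finset.Icc 1 d, ∀ i, 1 ≤ i → i ≤ n → c < f i (U s' i) := by
    intro s' hs' i hi
    induction i, hi using Nat.le_induction with
    | base => intro _; rw [hU1 s' hs']; exact hfv
    | succ i hi ih =>
      intro hin
      have hmem : i ∈ Finset.Icc 1 n := Finset.mem_Icc.2 ⟨hi, by omega⟩
      have hmem1 : (i+1) ∈ Finset.Icc 1 n := Finset.mem_Icc.2 ⟨by omega, hin⟩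
      have hL := (stepLU s' hs' i hmem (ih (by omega))).1
      rw [hrecU s' hs' i hmem]
      exact lt_trans hL (hford i hmem (i+1) hmem1 (Nat.lt_succ_self i) (L s' i))
  have hUchain : ∀ s' ∈ Finset.Icc 1 d, ∀ a b', 1 ≤ a → a ≤ b' → b' ≤ n + 1 →
      U s' b' ≤ U s' a := by
    intro s' hs' a b' ha hab
    induction b', hab using Nat.le_induction with
    | base => intro _; exact le_rfl
    | succ b' hab ih =>
      intro hb
      have hmem : b' ∈ Finset.Icc 1 n := Finset.mem_Icc.2 ⟨by omega, by omega⟩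
      have hU := key1 s' hs' b' (by omega) (by omega)
      calc U s' (b'+1) = L s' b' := hrecU s' hs' b' hmem
        _ ≤ U s' b' := (stepLU s' hs' b' hmem hU).2
        _ ≤ U s' a := ih (by omega)
  -- the key claim
  have K : ∀ j', 1 ≤ j' → j' ≤ n → ∀ s' ∈ Finset.Icc 1 d, U 1 j' ≤ U s' j' := by
    intro j'
    induction j' using Nat.strong_induction_on with
    | _ j' IH =>
    intro hj1 hjn' s' hs'
    set k0 := Nat.findGreatest (fun k' => 0 < t s' k') (j' - 1) with hk0def
    have hk0le : k0 ≤ j' - 1 := Nat.findGreatest_le _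
    have hz : ∀ i, k0 < i → i < j' → t s' i = 0 := by
      intro i h1 h2
      have hng : ¬ 0 < t s' i := Nat.findGreatest_is_greatest h1 (by omega)
      have hnn := htnn s' hs' i (Finset.mem_Icc.2 ⟨by omega, by omega⟩)
      linarith
    have hUconst : ∀ i, k0 + 1 ≤ i → i ≤ j' → U s' i = U s' (k0 + 1) := by
      intro i hi
      induction i, hi using Nat.le_induction with
      | base => intro _; rfl
      | succ i hi ih =>
        intro hij
        have hmem : i ∈ Finset.Icc 1 n := Finset.mem_Icc.2 ⟨by omega, by omega⟩
        have hgeq : gam n q t s' i = gam n q t s' (i + 1) := by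
          rw [hgstep s' i hmem, hz i (by omega) (by omega), zero_mul, zero_add]
        have hrec := hrecL s' hs' i hmem
        rw [← hgeq] at hrec
        have hWp : 0 < W l m (gam n q t s' i) := hWpos s' hs' i (by omega)
        have hfeq : f i (L s' i) = f i (U s' i) := by
          have hcanc := mul_right_cancel₀ (ne_of_gt hWp) hrec
          linarith
        have hLU : L s' i = U s' i := (hfm i hmem).injective hfeq
        rw [hrecU s' hs' i hmem, hLU, ih (by omega)]
    rcases Nat.eq_zero_or_pos k0 with hk00 | hk0pos
    · have hUv : U s' j' = v := by
        have h := hUconst j' (by omega) le_rfl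
        rw [hk00] at h
        norm_num at h
        rw [h, hU1 s' hs']
      rw [hUv]
      calc U 1 j' ≤ U 1 1 := hUchain 1 hd1 1 j' le_rfl hj1 (by omega)
        _ = v := hU1 1 hd1
    · have hk0j : k0 < j' := by omega
      have hk0n : k0 ∈ Finset.Icc 1 n := Finset.mem_Icc.2 ⟨hk0pos, by omega⟩
      have htk0 : 0 < t s' k0 := by
        have hne : k0 ≠ 0 := by omega
        rw [hk0def, Ne, Nat.findGreatest_eq_zero_iff] at hne
        push_neg at hne
        obtain ⟨i, _hi0, hib, hip⟩ := hne
        exact Nat.findGreatest_spec (P := fun k' => 0 < t s' k') hib hip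
      by_contra hcon
      push_neg at hcon
      have hUsmall : ∀ i, k0 + 1 ≤ i → i ≤ j' → U s' i < U 1 i := by
        intro i h1 h2
        rw [hUconst i h1 h2, ← hUconst j' (by omega) le_rfl]
        exact lt_of_lt_of_le hcon (hUchain 1 hd1 i j' (by omega) h2 (by omega))
      set u : ℕ → ℕ → ℝ :=
        fun σ i => M σ * W l m (gam n q t σ i) * (f i (U σ i) - c) with hu
      have upos : ∀ σ ∈ Finset.Icc 1 d, ∀ i, 1 ≤ i → i ≤ n → 0 < u σ i := by
        intro σ hσ i h1 h2
        have hfc' := key1 σ hσ i h1 h2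
        have hMp := hMpos σ hσ
        have hWp := hWpos σ hσ i h1
        simp only [hu]
        exact mul_pos (mul_pos hMp hWp) (by linarith)
      have urec : ∀ σ ∈ Finset.Icc 1 d, ∀ i ∈ Finset.Icc 1 n,
          M σ * W l m (gam n q t σ (i+1)) * (f i (U σ (i+1)) - c) = u σ i := by
        intro σ hσ i hi
        have h := hrecL σ hσ i hi
        rw [hrecU σ hσ i hi]
        simp only [hu]
        linear_combination (M σ) * h
      have step1 : ∀ i, k0 ≤ i → i + 1 ≤ j' → u s' i * u 1 (i+1) < u 1 i * u s' (i+1) := by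
        intro i hik hij
        have hmem : i ∈ Finset.Icc 1 n := Finset.mem_Icc.2 ⟨by omega, by omega⟩
        have hmem1 : (i+1) ∈ Finset.Icc 1 n := Finset.mem_Icc.2 ⟨by omega, by omega⟩
        have hLc : c < f i (L s' i) :=
          (stepLU s' hs' i hmem (key1 s' hs' i (by omega) (by omega))).1
        have hUeq : U s' (i+1) = L s' i := hrecU s' hs' i hmem
        have hUlt : U s' (i+1) < U 1 (i+1) := hUsmall (i+1) (by omega) hij
        have hcs : c < f i (U s' (i+1)) := by rw [hUeq]; exact hLc
        have hratio := hassum i hmem (i+1) hmem1 (Nat.lt_succ_self i)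
          (U 1 (i+1)) (U s' (i+1)) hUlt hcs
        have d1 : 0 < f (i+1) (U s' (i+1)) - c :=
          sub_pos.2 (key1 s' hs' (i+1) (by omega) (by omega))
        have d2 : 0 < f (i+1) (U 1 (i+1)) - c :=
          sub_pos.2 (key1 1 hd1 (i+1) (by omega) (by omega))
        have cross := (div_lt_div_iff₀ d1 d2).1 hratio
        have e1 := urec s' hs' i hmem
        have e2 := urec 1 hd1 i hmem
        have hpp : 0 < M s' * W l m (gam n q t s' (i+1)) * (M 1 * W l m (gam n q t 1 (i+1))) :=
          mul_pos (mul_pos (hMpos s' hs') (hWpos s' hs' (i+1) (by omega)))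
            (mul_pos (hMpos 1 hd1) (hWpos 1 hd1 (i+1) (by omega)))
        have h4 : u s' i * u 1 (i+1) =
            (M s' * W l m (gam n q t s' (i+1)) * (M 1 * W l m (gam n q t 1 (i+1)))) *
              ((f i (U s' (i+1)) - c) * (f (i+1) (U 1 (i+1)) - c)) := by
          rw [← e1]; simp only [hu]; ring
        have h5 : u 1 i * u s' (i+1) =
            (M s' * W l m (gam n q t s' (i+1)) * (M 1 * W l m (gam n q t 1 (i+1)))) *
              ((f i (U 1 (i+1)) - c) * (f (i+1) (U s' (i+1)) - c)) := by
          rw [← e2]; simp only [hu]; ring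
        rw [h4, h5]
        exact mul_lt_mul_of_pos_left cross hpp
      have C : ∀ i, k0 + 1 ≤ i → i ≤ j' → u s' k0 * u 1 i < u 1 k0 * u s' i := by
        intro i hi
        induction i, hi using Nat.le_induction with
        | base => intro h; exact step1 k0 le_rfl h
        | succ i hi ih =>
          intro hij
          have h1 := ih (by omega)
          have h2 := step1 i (by omega) hij
          have p1 := upos 1 hd1 i (by omega) (by omega)
          have p2 := upos 1 hd1 (i+1) (by omega) (by omega)
          have p3 := upos 1 hd1 k0 (by omega) (by omega)
          have p4 := upos s' hs' i (by omega) (by omega)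
          have A : u s' k0 * u 1 (i+1) * u 1 i < u 1 k0 * u s' (i+1) * u 1 i := by nlinarith
          exact lt_of_mul_lt_mul_right A p1.le
      have hCj := C j' (by omega) le_rfl
      have hUk : U 1 k0 ≤ U s' k0 := IH k0 hk0j hk0pos (by omega) s' hs'
      have hMWeq := hMW_eq k0 hk0n s' hs' htk0
      have h6 : u 1 k0 ≤ u s' k0 := by
        have hfle : f k0 (U 1 k0) - c ≤ f k0 (U s' k0) - c :=
          sub_le_sub_right ((hfm k0 hk0n).monotone hUk) c
        have hMW1 : 0 < M 1 * W l m (gam n q t 1 k0) :=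
          mul_pos (hMpos 1 hd1) (hWpos 1 hd1 k0 hk0pos)
        simp only [hu]
        rw [hMWeq]
        exact mul_le_mul_of_nonneg_left hfle hMW1.le
      have h7 : u s' j' < u 1 j' := by
        have hjm : j' ∈ Finset.Icc 1 n := Finset.mem_Icc.2 ⟨hj1, hjn'⟩
        have hle := hMW_le j' hjm s' hs'
        have hfUpos : 0 < f j' (U s' j') - c := sub_pos.2 (key1 s' hs' j' hj1 hjn')
        have hflt : f j' (U s' j') < f j' (U 1 j') := (hfm j' hjm) hcon
        have hMW1 : 0 < M 1 * W l m (gam n q t 1 j') :=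
          mul_pos (hMpos 1 hd1) (hWpos 1 hd1 j' hj1)
        simp only [hu]
        calc M s' * W l m (gam n q t s' j') * (f j' (U s' j') - c)
            ≤ M 1 * W l m (gam n q t 1 j') * (f j' (U s' j') - c) :=
              mul_le_mul_of_nonneg_right hle hfUpos.le
          _ < M 1 * W l m (gam n q t 1 j') * (f j' (U 1 j') - c) := by
              apply mul_lt_mul_of_pos_left _ hMW1
              linarith
      have p7 := upos s' hs' j' hj1 hjn'
      have p8 := upos s' hs' k0 hk0pos (by omega)
      have A1 := mul_le_mul_of_nonneg_right h6 p7.le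
      have A2 := mul_lt_mul_of_pos_left h7 p8
      linarith
  have hkmem : k ∈ Finset.Icc 1 n := Finset.mem_Icc.2 ⟨hk1, by omega⟩
  have hLUk : L s k = U s (k+1) := (hrecU s hs k hkmem).symm
  rw [hLUk]
  calc U 1 j ≤ U s j := K j (by omega) hjn s hs
    _ ≤ U s (k+1) := hUchain s hs (k+1) j (by omega) (by omega) (by omega)
end

section
/- Let s and r be two nodes, each with node-selection probabilities, values γ, endpoints L and payoffs u defined as in the context, and let k ∈ {1,…,n}. If u_{s,k} > u_{r,k} and γ_{s,k} < γ_{r,k}, then the set {j ∈ {k,…,n} : α_{s,j} < α_{r,j}} is nonempty, and, denoting its minimum by i, we have u_{s,j} > u_{r,j} for every j with k ≤ j ≤ i. -/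
/-- `γ_{a,i} = ∑_{j=i}^n α_{a,j}` for a node with selection probabilities `α`. -/
noncomputable def gamN (n : ℕ) (α : ℕ → ℝ) (i : ℕ) : ℝ :=
  ∑ j ∈ Finset.Icc i n, α j

/-- The maximum expected payoff `u_{a,i} = (f_i(L_{a,i-1}) - c) · W(γ_{a,i})` at state `i`
for a node with selection probabilities `α` and lower endpoints `L`. -/
noncomputable def payoff (l m n : ℕ) (c : ℝ) (f : ℕ → ℝ → ℝ)
    (α : ℕ → ℝ) (L : ℕ → ℝ) (i : ℕ) : ℝ :=
  (f i (L (i - 1)) - c) * W l m (gamN n α i)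

lemma w_hasDerivAt (l m : ℕ) (hm : 1 ≤ m) (x : ℝ) :
    HasDerivAt (w l m)
      ((m : ℝ) * ((l - 1).choose m : ℝ) * x ^ (m - 1) * (1 - x) ^ (l - 1 - m)) x := by
  set N := l - 1 with hN
  set g : ℕ → ℝ := fun i => (i : ℝ) * (N.choose i : ℝ) * x ^ (i - 1) * (1 - x) ^ (N - i) with hg
  have key : HasDerivAt (w l m) (∑ i ∈ Finset.Icc m N, (g i - g (i+1))) x := by
    have : ∀ i ∈ Finset.Icc m N, HasDerivAt
        (fun y : ℝ => (N.choose i : ℝ) * y ^ i * (1 - y) ^ (N - i)) (g i - g (i+1)) x := by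
      intro i hi
      simp only [Finset.mem_Icc] at hi
      have hu : HasDerivAt (fun y : ℝ => y ^ i) ((i:ℝ) * x ^ (i-1)) x := hasDerivAt_pow i x
      have h1 : HasDerivAt (fun y : ℝ => 1 - y) (-1) x := by
        simpa using (hasDerivAt_id x).const_sub 1
      have hv : HasDerivAt (fun y : ℝ => (1 - y) ^ (N - i))
          (((N - i : ℕ):ℝ) * (1 - x) ^ (N - i - 1) * (-1)) x :=
        (hasDerivAt_pow (N - i) (1 - x)).comp x h1
      have hprod := (hu.mul hv).const_mul ((N.choose i : ℝ))
      have heq : (fun y : ℝ => (N.choose i:ℝ) * y ^ i * (1 - y) ^ (N - i))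
          = fun y : ℝ => (N.choose i:ℝ) * (y ^ i * (1 - y) ^ (N - i)) := by
        funext y; ring
      rw [heq]
      refine hprod.congr_deriv ?_
      symm
      have hcast : (N.choose (i+1) : ℝ) * ((i+1 : ℕ):ℝ) = (N.choose i : ℝ) * ((N - i : ℕ):ℝ) := by
        exact_mod_cast congrArg (Nat.cast (R := ℝ)) (Nat.choose_succ_right_eq N i)
      have hexp : N - (i+1) = N - i - 1 := by omega
      simp only [hg, hexp, Nat.add_sub_cancel]
      rw [mul_comm ((i+1 : ℕ):ℝ) (N.choose (i+1) : ℝ), hcast]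
      ring
    have hs := HasDerivAt.sum this
    rw [Finset.sum_fn] at hs
    exact hs
  have htel : ∑ i ∈ Finset.Icc m N, (g i - g (i+1)) = g m - g (N+1) := by
    by_cases hmn : m ≤ N
    · rw [← Finset.Ico_add_one_right_eq_Icc, Finset.sum_Ico_eq_sum_range]
      have h := Finset.sum_range_sub' (fun t => g (m + t)) (N.succ - m)
      have e1 : m + (N.succ - m) = N + 1 := by omega
      simp only [add_zero] at h
      rw [e1] at h
      calc ∑ k ∈ Finset.range (N.succ - m), (g (m+k) - g (m+k+1))
          = ∑ k ∈ Finset.range (N.succ - m), (g (m+k) - g (m+(k+1))) := by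
            apply Finset.sum_congr rfl; intros; rw [add_assoc]
        _ = g m - g (N+1) := h
    · have he : Finset.Icc m N = ∅ := by
        rw [Finset.Icc_eq_empty_iff]; omega
      have hz1 : g m = 0 := by
        simp only [hg]
        rw [Nat.choose_eq_zero_of_lt (by omega)]
        simp
      have hz2 : g (N+1) = 0 := by
        simp only [hg]
        rw [Nat.choose_eq_zero_of_lt (by omega)]
        simp
      simp [he, hz1, hz2]
  have hz2 : g (N+1) = 0 := by
    simp only [hg]
    rw [Nat.choose_eq_zero_of_lt (by omega)]
    simp
  rw [htel, hz2, sub_zero] at key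
  exact key

lemma w_mono (l m : ℕ) (hm : 1 ≤ m) : MonotoneOn (w l m) (Set.Icc (0:ℝ) 1) := by
  have hder : ∀ x : ℝ, HasDerivAt (w l m)
      ((m : ℝ) * ((l - 1).choose m : ℝ) * x ^ (m - 1) * (1 - x) ^ (l - 1 - m)) x :=
    fun x => w_hasDerivAt l m hm x
  have hdiff : Differentiable ℝ (w l m) := fun x => (hder x).differentiableAt
  apply monotoneOn_of_deriv_nonneg (convex_Icc 0 1) hdiff.continuous.continuousOn
    (hdiff.differentiableOn)
  intro x hx
  rw [interior_Icc, Set.mem_Ioo] at hx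
  rw [(hder x).deriv]
  have h1 : (0:ℝ) ≤ x := hx.1.le
  have h2 : (0:ℝ) ≤ 1 - x := by linarith [hx.2]
  positivity

lemma gamN_succ (n : ℕ) (α : ℕ → ℝ) {j : ℕ} (h : j ≤ n) :
    gamN n α j = α j + gamN n α (j+1) := by
  unfold gamN
  rw [Finset.Icc_add_one_left_eq_Ioc, ← Finset.sum_insert (by simp),
    Finset.Ioc_insert_left h]

lemma gamN_nonneg (n : ℕ) (α : ℕ → ℝ) (h0 : ∀ j ∈ Finset.Icc 1 n, 0 ≤ α j)
    {t : ℕ} (ht : 1 ≤ t) : 0 ≤ gamN n α t := by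
  apply Finset.sum_nonneg
  intro j hj
  rw [Finset.mem_Icc] at hj
  exact h0 j (Finset.mem_Icc.mpr ⟨le_trans ht hj.1, hj.2⟩)

lemma gamN_lt_one (n : ℕ) (α : ℕ → ℝ) (h0 : ∀ j ∈ Finset.Icc 1 n, 0 ≤ α j)
    (hsum : ∑ j ∈ Finset.Icc 1 n, α j < 1) {t : ℕ} (ht : 1 ≤ t) : gamN n α t < 1 := by
  refine lt_of_le_of_lt ?_ hsum
  apply Finset.sum_le_sum_of_subset_of_nonneg (Finset.Icc_subset_Icc_left ht)
  intro j hj _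
  exact h0 j hj

lemma factC (l m n : ℕ) (c v : ℝ) (f : ℕ → ℝ → ℝ)
    (hford : ∀ i ∈ Finset.Icc 1 n, ∀ j ∈ Finset.Icc 1 n, i < j → ∀ x : ℝ, f i x < f j x)
    (hfv : c < f 1 v)
    (α : ℕ → ℝ) (L : ℕ → ℝ) (hL0 : L 0 = v)
    (hLrec : ∀ i ∈ Finset.Icc 1 n,
      (f i (L i) - c) * W l m (gamN n α (i + 1)) = (f i (L (i - 1)) - c) * W l m (gamN n α i))
    (hW : ∀ t, 1 ≤ t → 0 < W l m (gamN n α t)) :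
    ∀ i, 1 ≤ i → i ≤ n → c < f i (L (i - 1)) ∧ c < f i (L i) := by
  intro i hi1
  induction i, hi1 using Nat.le_induction with
  | base =>
    intro h1n
    have hbase : c < f 1 (L (1 - 1)) := by
      norm_num [hL0]; exact hfv
    refine ⟨hbase, ?_⟩
    have hrec := hLrec 1 (Finset.mem_Icc.mpr ⟨le_refl 1, h1n⟩)
    have hW1 := hW 1 (le_refl 1)
    have hW2 := hW 2 (by omega)
    nlinarith [hrec, hbase]
  | succ i hi ih =>
    intro hin
    obtain ⟨_, hprev⟩ := ih (by omega)
    have hmemi : i ∈ Finset.Icc 1 n := Finset.mem_Icc.mpr ⟨hi, by omega⟩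
    have hmemi1 : (i+1) ∈ Finset.Icc 1 n := Finset.mem_Icc.mpr ⟨by omega, hin⟩
    have h1 : c < f (i+1) (L ((i+1) - 1)) := by
      have := hford i hmemi (i+1) hmemi1 (by omega) (L i)
      simpa using lt_trans hprev this
    refine ⟨h1, ?_⟩
    have hrec := hLrec (i+1) hmemi1
    have hW1 := hW (i+1) (by omega)
    have hW2 := hW (i+2) (by omega)
    nlinarith [hrec, h1]

theorem stmt14 (l m n : ℕ) (hm : 1 ≤ m) (hml : m ≤ l - 1) (hn : 1 ≤ n)
    (c v : ℝ) (f : ℕ → ℝ → ℝ)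
    (hfc : ∀ j ∈ Finset.Icc 1 n, Continuous (f j))
    (hfm : ∀ j ∈ Finset.Icc 1 n, StrictMono (f j))
    (hfb : ∀ j ∈ Finset.Icc 1 n, Function.Bijective (f j))
    (hford : ∀ i ∈ Finset.Icc 1 n, ∀ j ∈ Finset.Icc 1 n, i < j → ∀ x : ℝ, f i x < f j x)
    (hfv : c < f 1 v)
    (hassum : ∀ i ∈ Finset.Icc 1 n, ∀ j ∈ Finset.Icc 1 n, i < j →
      ∀ x y : ℝ, y < x → c < f i y →
        (f i y - c) / (f j y - c) < (f i x - c) / (f j x - c))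
    (αs αr : ℕ → ℝ)
    (hαs0 : ∀ j ∈ Finset.Icc 1 n, 0 ≤ αs j) (hαssum : ∑ j ∈ Finset.Icc 1 n, αs j < 1)
    (hαr0 : ∀ j ∈ Finset.Icc 1 n, 0 ≤ αr j) (hαrsum : ∑ j ∈ Finset.Icc 1 n, αr j < 1)
    (Ls Lr : ℕ → ℝ) (hLs0 : Ls 0 = v) (hLr0 : Lr 0 = v)
    (hLsrec : ∀ i ∈ Finset.Icc 1 n,
      (f i (Ls i) - c) * W l m (gamN n αs (i + 1)) =
        (f i (Ls (i - 1)) - c) * W l m (gamN n αs i))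
    (hLrrec : ∀ i ∈ Finset.Icc 1 n,
      (f i (Lr i) - c) * W l m (gamN n αr (i + 1)) =
        (f i (Lr (i - 1)) - c) * W l m (gamN n αr i))
    (k : ℕ) (hk1 : 1 ≤ k) (hkn : k ≤ n)
    (hu : payoff l m n c f αr Lr k < payoff l m n c f αs Ls k)
    (hγ : gamN n αs k < gamN n αr k) :
    ∃ i : ℕ, k ≤ i ∧ i ≤ n ∧ αs i < αr i ∧
      (∀ j : ℕ, k ≤ j → j ≤ n → αs j < αr j → i ≤ j) ∧
      (∀ j : ℕ, k ≤ j → j ≤ i →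
        payoff l m n c f αr Lr j < payoff l m n c f αs Ls j) := by
  classical
  have hWpos : ∀ x : ℝ, 0 ≤ x → x < 1 → 0 < W l m x := by
    intro x h0 h1
    have := w_lt_one l m hm h0 h1
    unfold W; linarith
  have hWmono : ∀ x y : ℝ, 0 ≤ x → x ≤ y → y ≤ 1 → W l m y ≤ W l m x := by
    intro x y h0 hxy hy1
    have := w_mono l m hm (Set.mem_Icc.mpr ⟨h0, hxy.trans hy1⟩)
      (Set.mem_Icc.mpr ⟨h0.trans hxy, hy1⟩) hxy
    unfold W; linarith
  have hγs : ∀ t : ℕ, 1 ≤ t → 0 ≤ gamN n αs t ∧ gamN n αs t < 1 :=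
    fun t ht => ⟨gamN_nonneg n αs hαs0 ht, gamN_lt_one n αs hαs0 hαssum ht⟩
  have hγr : ∀ t : ℕ, 1 ≤ t → 0 ≤ gamN n αr t ∧ gamN n αr t < 1 :=
    fun t ht => ⟨gamN_nonneg n αr hαr0 ht, gamN_lt_one n αr hαr0 hαrsum ht⟩
  have hWs : ∀ t : ℕ, 1 ≤ t → 0 < W l m (gamN n αs t) :=
    fun t ht => hWpos _ (hγs t ht).1 (hγs t ht).2
  have hWr : ∀ t : ℕ, 1 ≤ t → 0 < W l m (gamN n αr t) :=
    fun t ht => hWpos _ (hγr t ht).1 (hγr t ht).2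
  have hCs := factC l m n c v f hford hfv αs Ls hLs0 hLsrec hWs
  have hCr := factC l m n c v f hford hfv αr Lr hLr0 hLrrec hWr
  set S := (Finset.Icc k n).filter (fun j => αs j < αr j) with hSdef
  have hSne : S.Nonempty := by
    by_contra hS
    rw [Finset.not_nonempty_iff_eq_empty, Finset.filter_eq_empty_iff] at hS
    have : gamN n αr k ≤ gamN n αs k := by
      apply Finset.sum_le_sum
      intro j hj
      exact le_of_not_gt (hS hj)
    linarith
  set i := S.min' hSne with hidef
  have hiS : i ∈ S := Finset.min'_mem _ _
  rw [hSdef, Finset.mem_filter, Finset.mem_Icc] at hiS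
  have hmin : ∀ j, k ≤ j → j ≤ n → αs j < αr j → i ≤ j := by
    intro j h1 h2 h3
    apply Finset.min'_le
    rw [hSdef, Finset.mem_filter, Finset.mem_Icc]
    exact ⟨⟨h1, h2⟩, h3⟩
  have main : ∀ j, k ≤ j → j ≤ i →
      gamN n αs j < gamN n αr j ∧ payoff l m n c f αr Lr j < payoff l m n c f αs Ls j := by
    intro j hkj
    induction j, hkj using Nat.le_induction with
    | base => exact fun _ => ⟨hγ, hu⟩
    | succ j hkj ih =>
      intro hji
      have hjlt : j < i := hji
      have hjn : j ≤ n := by omega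
      have hj1n : j + 1 ≤ n := by
        have : i ≤ n := hiS.1.2
        omega
      obtain ⟨hGj, hQj⟩ := ih (le_of_lt hjlt)
      have hj1 : 1 ≤ j := le_trans hk1 hkj
      have hαj : αr j ≤ αs j := by
        by_contra h
        push_neg at h
        have := hmin j hkj hjn h
        omega
      have hGj1 : gamN n αs (j+1) < gamN n αr (j+1) := by
        have e1 := gamN_succ n αs hjn
        have e2 := gamN_succ n αr hjn
        linarith
      refine ⟨hGj1, ?_⟩
      have hmemj : j ∈ Finset.Icc 1 n := Finset.mem_Icc.mpr ⟨hj1, hjn⟩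
      have hmemj1 : (j+1) ∈ Finset.Icc 1 n := Finset.mem_Icc.mpr ⟨by omega, hj1n⟩
      have hA1 : c < f j (Ls j) := (hCs j hj1 hjn).2
      have hA2 : c < f j (Lr j) := (hCr j hj1 hjn).2
      have hB1 : c < f (j+1) (Ls j) := lt_trans hA1 (hford j hmemj (j+1) hmemj1 (by omega) (Ls j))
      have hB2 : c < f (j+1) (Lr j) := lt_trans hA2 (hford j hmemj (j+1) hmemj1 (by omega) (Lr j))
      have hWs1 : 0 < W l m (gamN n αs (j+1)) := hWs (j+1) (by omega)
      have hWr1 : 0 < W l m (gamN n αr (j+1)) := hWr (j+1) (by omega)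
      have hps : payoff l m n c f αs Ls (j+1)
          = (f (j+1) (Ls j) - c) * W l m (gamN n αs (j+1)) := by
        unfold payoff
        norm_num
      have hpr : payoff l m n c f αr Lr (j+1)
          = (f (j+1) (Lr j) - c) * W l m (gamN n αr (j+1)) := by
        unfold payoff
        norm_num
      have hrecs : (f j (Ls j) - c) * W l m (gamN n αs (j+1)) = payoff l m n c f αs Ls j := by
        unfold payoff
        exact hLsrec j hmemj
      have hrecr : (f j (Lr j) - c) * W l m (gamN n αr (j+1)) = payoff l m n c f αr Lr j := by
        unfold payoff
        exact hLrrec j hmemj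
      have hur : 0 < payoff l m n c f αr Lr j := by
        unfold payoff
        have h1 := (hCr j hj1 hjn).1
        have h2 := hWr j (by omega)
        exact mul_pos (by linarith) h2
      have hus : 0 < payoff l m n c f αs Ls j := lt_trans hur hQj
      rw [hps, hpr]
      rcases le_or_gt (Ls j) (Lr j) with hle | hlt
      · have hratio : (f j (Ls j) - c) / (f (j+1) (Ls j) - c)
            ≤ (f j (Lr j) - c) / (f (j+1) (Lr j) - c) := by
          rcases eq_or_lt_of_le hle with heq | hlt'
          · rw [heq]
          · exact le_of_lt (hassum j hmemj (j+1) hmemj1 (by omega) (Lr j) (Ls j) hlt' hA1)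
        have hA1p : (0:ℝ) < f j (Ls j) - c := by linarith
        have hA2p : (0:ℝ) < f j (Lr j) - c := by linarith
        have hB1p : (0:ℝ) < f (j+1) (Ls j) - c := by linarith
        have hB2p : (0:ℝ) < f (j+1) (Lr j) - c := by linarith
        have hcross : (f j (Ls j) - c) * (f (j+1) (Lr j) - c)
            ≤ (f j (Lr j) - c) * (f (j+1) (Ls j) - c) :=
          (div_le_div_iff₀ hB1p hB2p).mp hratio
        have hWseq : W l m (gamN n αs (j+1)) = payoff l m n c f αs Ls j / (f j (Ls j) - c) := by
          field_simp
          linarith [hrecs]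
        have hWreq : W l m (gamN n αr (j+1)) = payoff l m n c f αr Lr j / (f j (Lr j) - c) := by
          field_simp
          linarith [hrecr]
        rw [hWseq, hWreq]
        rw [div_eq_mul_inv, div_eq_mul_inv]
        have hi1 : (0:ℝ) < (f j (Ls j) - c)⁻¹ := by positivity
        have hi2 : (0:ℝ) < (f j (Lr j) - c)⁻¹ := by positivity
        have key : (f (j+1) (Lr j) - c) * payoff l m n c f αr Lr j * (f j (Ls j) - c)
            < (f (j+1) (Ls j) - c) * payoff l m n c f αs Ls j * (f j (Lr j) - c) := by
          calc (f (j+1) (Lr j) - c) * payoff l m n c f αr Lr j * (f j (Ls j) - c)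
              = ((f j (Ls j) - c) * (f (j+1) (Lr j) - c)) * payoff l m n c f αr Lr j := by ring
            _ ≤ ((f j (Lr j) - c) * (f (j+1) (Ls j) - c)) * payoff l m n c f αr Lr j :=
                mul_le_mul_of_nonneg_right hcross hur.le
            _ < ((f j (Lr j) - c) * (f (j+1) (Ls j) - c)) * payoff l m n c f αs Ls j :=
                mul_lt_mul_of_pos_left hQj (mul_pos hA2p hB1p)
            _ = (f (j+1) (Ls j) - c) * payoff l m n c f αs Ls j * (f j (Lr j) - c) := by ring
        have e1 : (f (j+1) (Lr j) - c) * (payoff l m n c f αr Lr j * (f j (Lr j) - c)⁻¹)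
            = ((f (j+1) (Lr j) - c) * payoff l m n c f αr Lr j * (f j (Ls j) - c))
              * ((f j (Ls j) - c)⁻¹ * (f j (Lr j) - c)⁻¹) := by
          field_simp
        have e2 : (f (j+1) (Ls j) - c) * (payoff l m n c f αs Ls j * (f j (Ls j) - c)⁻¹)
            = ((f (j+1) (Ls j) - c) * payoff l m n c f αs Ls j * (f j (Lr j) - c))
              * ((f j (Ls j) - c)⁻¹ * (f j (Lr j) - c)⁻¹) := by
          field_simp
        rw [e1, e2]
        exact mul_lt_mul_of_pos_right key (mul_pos hi1 hi2)
      · have hWcmp : W l m (gamN n αr (j+1)) ≤ W l m (gamN n αs (j+1)) :=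
          hWmono _ _ (hγs (j+1) (by omega)).1 (le_of_lt hGj1) (le_of_lt (hγr (j+1) (by omega)).2)
        have hBlt : f (j+1) (Lr j) < f (j+1) (Ls j) := (hfm (j+1) hmemj1) hlt
        calc (f (j+1) (Lr j) - c) * W l m (gamN n αr (j+1))
            < (f (j+1) (Ls j) - c) * W l m (gamN n αr (j+1)) :=
              mul_lt_mul_of_pos_right (by linarith) hWr1
          _ ≤ (f (j+1) (Ls j) - c) * W l m (gamN n αs (j+1)) :=
              mul_le_mul_of_nonneg_left hWcmp (by linarith)
  exact ⟨i, hiS.1.1, hiS.1.2, hiS.2, hmin, fun j h1 h2 => (main j h1 h2).2⟩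
end
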